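/- For every d ≥ 1 and all x, y ∈ ℝ^d, the softmax map satisfies ‖σ(x) − σ(y)‖₁ ≤ ‖x − y‖_∞. Equivalently, for any probability vector p, the function f(θ) = KL(p‖σ(θ)) is 1-smooth with respect to the ℓ∞ norm: ‖∇f(x) − ∇f(y)‖₁ ≤ ‖x − y‖_∞ for all x, y ∈ ℝ^d. -/

import Mathlib

/-- The softmax map `σ : ℝ^d → ℝ^d`, `σ(θ)_k = exp(θ_k) / ∑_j exp(θ_j)`. -/
noncomputable def softmax {d : ℕ} (θ : Fin d → ℝ) : Fin d → ℝ :=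
  fun k => Real.exp (θ k) / ∑ j, Real.exp (θ j)

private lemma sinh_aux (s : ℝ) (hs : 0 ≤ s) :
    Real.exp s - Real.exp (-s) ≤ s * (Real.exp s + Real.exp (-s)) := by
  set f : ℝ → ℝ := fun u => u * (Real.exp u + Real.exp (-u)) - (Real.exp u - Real.exp (-u))
    with hf
  have hderiv : ∀ u : ℝ, HasDerivAt f (u * (Real.exp u - Real.exp (-u))) u := by
    intro u
    have h1 : HasDerivAt (fun v : ℝ => Real.exp (-v)) (-Real.exp (-u)) u := by
      simpa using ((hasDerivAt_id u).neg.exp)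
    have h2 : HasDerivAt (fun v : ℝ => Real.exp v) (Real.exp u) u := Real.hasDerivAt_exp u
    have h3 := (((hasDerivAt_id u).mul (h2.add h1)).sub (h2.sub h1))
    refine h3.congr_deriv ?_
    simp only [id_eq, Pi.add_apply]
    ring
  have hmono : MonotoneOn f (Set.Ici 0) := by
    apply monotoneOn_of_deriv_nonneg (convex_Ici 0)
    · exact fun u _ => ((hderiv u).differentiableAt.continuousAt).continuousWithinAt
    · intro u _
      exact ((hderiv u).differentiableAt).differentiableWithinAt
    · intro u hu
      rw [(hderiv u).deriv]
      rw [interior_Ici] at hu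
      have hu' : 0 < u := hu
      have hle : Real.exp (-u) ≤ Real.exp u := Real.exp_le_exp.mpr (by linarith)
      nlinarith
  have h0 : f 0 ≤ f s := hmono Set.self_mem_Ici hs hs
  simp [hf] at h0
  linarith [h0]

private lemma key_frac (α β M r r' s s' : ℝ) (hαβ : α * β = 1) (hβ : 0 < β)
    (hβα : β ≤ α) (hM : α + β - 2 ≤ M * (α - β)) (hM0 : 0 ≤ M)
    (hr : 0 ≤ r) (hr' : 0 ≤ r') (hB : 0 < r + r')
    (hs : 0 ≤ s) (hs' : 0 ≤ s') (hA : 0 < s + s')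
    (h1 : s ≤ α * r) (h2 : β * r' ≤ s') :
    s / (s + s') - r / (r + r') ≤ M := by
  have hα : 0 < α := lt_of_lt_of_le hβ hβα
  have hD : 0 < α * r + β * r' := by nlinarith [mul_pos hβ hB, mul_nonneg (sub_nonneg.mpr hβα) hr]
  have step1 : s / (s + s') ≤ (α * r) / (α * r + β * r') := by
    rw [div_le_div_iff₀ hA hD]
    nlinarith [mul_le_mul h1 h2 (by positivity) (by positivity)]
  have amgm : 2 * (r * r') ≤ α * r ^ 2 + β * r' ^ 2 := by
    have expand : α * (α * r ^ 2 + β * r' ^ 2 - 2 * (r * r')) = (α * r - r') ^ 2 := by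
      linear_combination r' ^ 2 * hαβ
    nlinarith [sq_nonneg (α * r - r'), hα]
  have h4 : (α - β) ^ 2 = (α + β - 2) * (α + β + 2) := by
    linear_combination (-4 : ℝ) * hαβ
  have h5 : (α - β) ^ 2 ≤ M * (α - β) * (α + β + 2) := by
    nlinarith [hM, h4]
  have key1 : α - β ≤ M * (α + β + 2) := by
    rcases eq_or_lt_of_le hβα with h | h
    · have : α - β = 0 := by rw [h]; ring
      rw [this]
      nlinarith
    · have hpos : 0 < α - β := sub_pos.mpr h
      have := le_of_mul_le_mul_left (show (α - β) * (α - β) ≤ (α - β) * (M * (α + β + 2)) by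
        nlinarith [h5]) hpos
      exact this
  have step2 : (α * r) / (α * r + β * r') - r / (r + r') ≤ M := by
    rw [div_sub_div _ _ hD.ne' hB.ne', div_le_iff₀ (mul_pos hD hB)]
    nlinarith [mul_le_mul_of_nonneg_right key1 (mul_nonneg hr hr'),
      mul_le_mul_of_nonneg_left amgm hM0]
  linarith

/-- `‖σ(x) − σ(y)‖₁ ≤ ‖x − y‖_∞` for all `x, y ∈ ℝ^d` (the norm on
`Fin d → ℝ` is the sup norm), so `f(θ) = KL(p‖σ(θ))` is 1-smooth w.r.t. the ℓ∞ norm. -/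
theorem softmax_lipschitz_linf (d : ℕ) (hd : 1 ≤ d) :
    ∀ x y : Fin d → ℝ,
      (∑ k, |softmax x k - softmax y k|) ≤ ‖x - y‖ := by
  intro x y
  haveI : Nonempty (Fin d) := Fin.pos_iff_nonempty.mp hd
  classical
  set t := ‖x - y‖ with ht
  have ht0 : 0 ≤ t := norm_nonneg _
  have hbnd : ∀ k, |x k - y k| ≤ t := by
    intro k
    calc |x k - y k| = ‖(x - y) k‖ := by simp
      _ ≤ ‖x - y‖ := norm_le_pi_norm _ k
  have hαβ : Real.exp t * Real.exp (-t) = 1 := by rw [← Real.exp_add]; simp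
  have hβ : 0 < Real.exp (-t) := Real.exp_pos _
  have hβα : Real.exp (-t) ≤ Real.exp t := Real.exp_le_exp.mpr (by linarith)
  have hM : Real.exp t + Real.exp (-t) - 2 ≤ (t / 2) * (Real.exp t - Real.exp (-t)) := by
    have h := sinh_aux (t / 2) (by linarith)
    have e1 : Real.exp t = Real.exp (t / 2) * Real.exp (t / 2) := by
      rw [← Real.exp_add]; ring_nf
    have e2 : Real.exp (-t) = Real.exp (-(t / 2)) * Real.exp (-(t / 2)) := by
      rw [← Real.exp_add]; ring_nf
    have e3 : Real.exp (t / 2) * Real.exp (-(t / 2)) = 1 := by rw [← Real.exp_add]; simp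
    have hEF : Real.exp (-(t / 2)) ≤ Real.exp (t / 2) := Real.exp_le_exp.mpr (by linarith)
    nlinarith [mul_le_mul_of_nonneg_left h (sub_nonneg.mpr hEF), e1, e2, e3]
  have hApos : 0 < ∑ j, Real.exp (x j) :=
    Finset.sum_pos (fun j _ => Real.exp_pos _) Finset.univ_nonempty
  have hBpos : 0 < ∑ j, Real.exp (y j) :=
    Finset.sum_pos (fun j _ => Real.exp_pos _) Finset.univ_nonempty
  set S : Finset (Fin d) := Finset.univ.filter (fun k => softmax y k < softmax x k) with hS
  -- sums are 1
  have hsum_p : ∑ k, softmax x k = 1 := by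
    unfold softmax
    rw [← Finset.sum_div, div_self hApos.ne']
  have hsum_q : ∑ k, softmax y k = 1 := by
    unfold softmax
    rw [← Finset.sum_div, div_self hBpos.ne']
  -- the abs sum equals twice the sum over S
  have habs : ∑ k, |softmax x k - softmax y k|
      = 2 * ∑ k ∈ S, (softmax x k - softmax y k) := by
    have hA1 : ∑ k ∈ S, |softmax x k - softmax y k|
        = ∑ k ∈ S, (softmax x k - softmax y k) := by
      apply Finset.sum_congr rfl
      intro k hk
      rw [hS, Finset.mem_filter] at hk
      exact abs_of_pos (sub_pos.mpr hk.2)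
    have hA2 : ∑ k ∈ Sᶜ, |softmax x k - softmax y k|
        = ∑ k ∈ Sᶜ, (softmax y k - softmax x k) := by
      apply Finset.sum_congr rfl
      intro k hk
      rw [Finset.mem_compl, hS, Finset.mem_filter] at hk
      have : ¬ softmax y k < softmax x k := fun h => hk ⟨Finset.mem_univ k, h⟩
      rw [abs_of_nonpos (by linarith [not_lt.mp this]), neg_sub]
    have hsplit := Finset.sum_add_sum_compl S (fun k => |softmax x k - softmax y k|)
    have hzero : (∑ k ∈ S, (softmax x k - softmax y k))
        + (∑ k ∈ Sᶜ, (softmax x k - softmax y k)) = 0 := by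
      rw [Finset.sum_add_sum_compl]
      rw [Finset.sum_sub_distrib, hsum_p, hsum_q]
      ring
    have hneg : ∑ k ∈ Sᶜ, (softmax y k - softmax x k)
        = - ∑ k ∈ Sᶜ, (softmax x k - softmax y k) := by
      rw [← Finset.sum_neg_distrib]
      apply Finset.sum_congr rfl
      intro k _
      ring
    linarith [hsplit, hA1, hA2, hzero, hneg]
  -- express the S-sums as fractions
  have hps : ∑ k ∈ S, softmax x k = (∑ k ∈ S, Real.exp (x k)) / (∑ j, Real.exp (x j)) := by
    unfold softmax
    rw [Finset.sum_div]
  have hqs : ∑ k ∈ S, softmax y k = (∑ k ∈ S, Real.exp (y k)) / (∑ j, Real.exp (y j)) := by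
    unfold softmax
    rw [Finset.sum_div]
  -- coordinatewise exponential bounds
  have h1 : (∑ k ∈ S, Real.exp (x k)) ≤ Real.exp t * ∑ k ∈ S, Real.exp (y k) := by
    rw [Finset.mul_sum]
    apply Finset.sum_le_sum
    intro k _
    rw [← Real.exp_add]
    apply Real.exp_le_exp.mpr
    have := abs_le.mp (hbnd k)
    linarith [this.2]
  have h2 : Real.exp (-t) * ∑ k ∈ Sᶜ, Real.exp (y k) ≤ ∑ k ∈ Sᶜ, Real.exp (x k) := by
    rw [Finset.mul_sum]
    apply Finset.sum_le_sum
    intro k _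
    rw [← Real.exp_add]
    apply Real.exp_le_exp.mpr
    have := abs_le.mp (hbnd k)
    linarith [this.1]
  have hsumx : (∑ k ∈ S, Real.exp (x k)) + (∑ k ∈ Sᶜ, Real.exp (x k))
      = ∑ j, Real.exp (x j) := Finset.sum_add_sum_compl S _
  have hsumy : (∑ k ∈ S, Real.exp (y k)) + (∑ k ∈ Sᶜ, Real.exp (y k))
      = ∑ j, Real.exp (y j) := Finset.sum_add_sum_compl S _
  have hkey := key_frac (Real.exp t) (Real.exp (-t)) (t / 2)
    (∑ k ∈ S, Real.exp (y k)) (∑ k ∈ Sᶜ, Real.exp (y k))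
    (∑ k ∈ S, Real.exp (x k)) (∑ k ∈ Sᶜ, Real.exp (x k))
    hαβ hβ hβα hM (by linarith)
    (Finset.sum_nonneg fun k _ => (Real.exp_pos _).le)
    (Finset.sum_nonneg fun k _ => (Real.exp_pos _).le)
    (by rw [hsumy]; exact hBpos)
    (Finset.sum_nonneg fun k _ => (Real.exp_pos _).le)
    (Finset.sum_nonneg fun k _ => (Real.exp_pos _).le)
    (by rw [hsumx]; exact hApos)
    h1 h2
  rw [hsumx, hsumy] at hkey
  rw [habs]
  have : ∑ k ∈ S, (softmax x k - softmax y k)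
      = (∑ k ∈ S, Real.exp (x k)) / (∑ j, Real.exp (x j))
        - (∑ k ∈ S, Real.exp (y k)) / (∑ j, Real.exp (y j)) := by
    rw [Finset.sum_sub_distrib, hps, hqs]
  rw [this]
  linarith
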